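/- arXiv:1609.02596 — 6 statements merged into one kernel-verified Lean document; each statement's English description precedes it below -/
import Mathlib

section
/- An interior profile characterizes the Nash equilibrium by the first-order conditions: a profile q* with q*_m > 0 for every m is a Nash equilibrium of the content providers' game if and only if q*_m = 1/π − 1 − J*_m/α_m for every m, where J*_m = Σ_{l≠m} q*_l; equivalently, if and only if q*_m + (1/α_m)·Σ_{l≠m} q*_l = 1/π − 1 for every m. -/
open Finset

/-- Content provider `m`'s utility given the profile `q` of requested
quantities: `u_m(q) = log(1 + q_m/(1 + J_m/α_m)) − π·q_m`, where
`J_m = Σ_{l≠m} q_l`. -/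
noncomputable def cpUtility {M : ℕ} (α : Fin M → ℝ) (π : ℝ) (q : Fin M → ℝ)
    (m : Fin M) : ℝ :=
  Real.log (1 + q m / (1 + (∑ l ∈ Finset.univ.erase m, q l) / α m)) - π * q m

/-- A profile `q` with nonnegative components is a Nash equilibrium if for
every `m`, `q m` maximizes `x ↦ u_m(x, q_{−m})` over `x ≥ 0`. -/
def IsNashEq {M : ℕ} (α : Fin M → ℝ) (π : ℝ) (q : Fin M → ℝ) : Prop :=
  (∀ m, 0 ≤ q m) ∧
  ∀ m, ∀ x : ℝ, 0 ≤ x →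
    cpUtility α π (Function.update q m x) m ≤ cpUtility α π q m

private lemma logrw (c x : ℝ) (hc : 0 < c) (hx : 0 < c + x) :
    Real.log (1 + x / c) = Real.log (c + x) - Real.log c := by
  have : 1 + x / c = (c + x) / c := by field_simp
  rw [this, Real.log_div hx.ne' hc.ne']

private lemma key (c π t : ℝ) (hc : 0 < c) (hπ : 0 < π) (hπ1 : π < 1) (ht : 0 < t) :
    (∀ x : ℝ, 0 ≤ x → Real.log (1 + x / c) - π * x ≤ Real.log (1 + t / c) - π * t) ↔
      t = 1 / π - c := by
  have hct : 0 < c + t := by linarith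
  constructor
  · intro h
    by_cases hs : 1 / π ≤ c
    · -- then f t < f 0 = 0, contradicting h 0
      exfalso
      have h0 := h 0 le_rfl
      simp only [zero_div, add_zero, mul_zero, Real.log_one] at h0
      have hlt : Real.log (1 + t / c) < t / c := by
        have h2 : 0 < t / c := div_pos ht hc
        have := Real.log_lt_sub_one_of_pos (x := 1 + t / c) (by positivity)
          (by intro h; rw [show (1:ℝ) + t / c = 1 ↔ t / c = 0 from by constructor <;> intro <;> linarith] at h; linarith)
        linarith
      have h1 : 1 ≤ c * π := (div_le_iff₀ hπ).mp hs
      have h2 : t / c ≤ π * t := by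
        rw [div_le_iff₀ hc]
        nlinarith [mul_le_mul_of_nonneg_left h1 ht.le]
      linarith
    · push_neg at hs
      set s := 1 / π - c with hsd
      have hs0 : 0 < s := by rw [hsd]; linarith
      have hcs : c + s = 1 / π := by ring
      have hfs := h s hs0.le
      -- show f t ≤ f s, strict unless t = s
      by_contra hne
      have hne' : c + t ≠ 1 / π := by
        intro h'
        apply hne; have : c + t = c + s := by rw [h', hcs]
        linarith
      have hpos : 0 < π * (c + t) := by positivity
      have hlt : Real.log (π * (c + t)) < π * (c + t) - 1 :=
        Real.log_lt_sub_one_of_pos hpos (by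
          intro h'
          apply hne'
          field_simp at h' ⊢
          linarith)
      rw [logrw c t hc hct, logrw c s hc (by rw [hcs]; positivity)] at hfs
      rw [Real.log_mul hπ.ne' hct.ne'] at hlt
      have hls : Real.log (c + s) = - Real.log π := by
        rw [hcs, one_div, Real.log_inv]
      rw [hls] at hfs
      have hπs : π * s = 1 - π * c := by rw [hsd]; field_simp
      linarith
  · intro h x hx
    subst h
    have hct' : c + (1 / π - c) = 1 / π := by ring
    have hcx : 0 < c + x := by linarith
    rw [logrw c x hc hcx, logrw c _ hc (by rw [hct']; positivity)]
    have hls : Real.log (c + (1 / π - c)) = - Real.log π := by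
      rw [hct', one_div, Real.log_inv]
    rw [hls]
    have hpos : 0 < π * (c + x) := by positivity
    have hle : Real.log (π * (c + x)) ≤ π * (c + x) - 1 :=
      Real.log_le_sub_one_of_pos hpos
    rw [Real.log_mul hπ.ne' hcx.ne'] at hle
    have : π * (1 / π - c) = 1 - π * c := by field_simp
    nlinarith

/-- an interior profile `q*` (with `q*_m > 0` for every `m`) is a
Nash equilibrium of the content providers' game if and only if
`q*_m = 1/π − 1 − J*_m/α_m` for every `m`, where `J*_m = Σ_{l≠m} q*_l`;
equivalently, if and only if `q*_m + (1/α_m)·Σ_{l≠m} q*_l = 1/π − 1` for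
every `m`. -/
theorem interior_nash_iff_first_order (M : ℕ) (hM : 2 ≤ M) (α : Fin M → ℝ)
    (hα : ∀ m, 0 < α m) (π : ℝ) (hπ : π ∈ Set.Ioo (0 : ℝ) 1)
    (q : Fin M → ℝ) (hq : ∀ m, 0 < q m) :
    (IsNashEq α π q ↔
      ∀ m, q m = 1 / π - 1 - (∑ l ∈ Finset.univ.erase m, q l) / α m) ∧
    (IsNashEq α π q ↔
      ∀ m, q m + (1 / α m) * ∑ l ∈ Finset.univ.erase m, q l = 1 / π - 1) := by
  obtain ⟨hπ0, hπ1⟩ := hπ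
  have hJ : ∀ m : Fin M, 0 ≤ ∑ l ∈ Finset.univ.erase m, q l := fun m =>
    Finset.sum_nonneg fun l _ => (hq l).le
  have hc : ∀ m : Fin M, 0 < 1 + (∑ l ∈ Finset.univ.erase m, q l) / α m := fun m => by
    have := hJ m; have := (hα m); positivity
  have hupd : ∀ (m : Fin M) (x : ℝ),
      ∑ l ∈ Finset.univ.erase m, Function.update q m x l = ∑ l ∈ Finset.univ.erase m, q l :=
    fun m x => Finset.sum_congr rfl fun l hl =>
      Function.update_of_ne (Finset.ne_of_mem_erase hl) _ _
  have hmain : IsNashEq α π q ↔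
      ∀ m, q m = 1 / π - 1 - (∑ l ∈ Finset.univ.erase m, q l) / α m := by
    constructor
    · intro ⟨_, h⟩ m
      set c := 1 + (∑ l ∈ Finset.univ.erase m, q l) / α m with hcd
      have := (key c π (q m) (hc m) hπ0 hπ1 (hq m)).mp (fun x hx => by
        have hx' := h m x hx
        unfold cpUtility at hx'
        rw [hupd m x, Function.update_self] at hx'
        exact hx')
      rw [this, hcd]; ring
    · intro h
      refine ⟨fun m => (hq m).le, fun m x hx => ?_⟩
      set c := 1 + (∑ l ∈ Finset.univ.erase m, q l) / α m with hcd
      have hqm : q m = 1 / π - c := by rw [hcd]; rw [h m]; ring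
      have := (key c π (q m) (hc m) hπ0 hπ1 (hq m)).mpr hqm x hx
      unfold cpUtility
      rw [hupd m x, Function.update_self]
      exact this
  refine ⟨hmain, hmain.trans ?_⟩
  refine forall_congr' fun m => ?_
  have hα' := (hα m).ne'
  rw [one_div (α m), inv_mul_eq_div]
  constructor <;> intro h <;> linarith
end

section
/- The determinant of the best-response matrix admits the closed form det(D(α)) = (1 − ((1 − α_1)/α_1)·Σ_{l=2}^{M} 1/(α_l − 1)) · ∏_{l=2}^{M} (1 − 1/α_l), for any M ≥ 2 and any reals α_1, …, α_M with α_l ≠ 0 and α_l ≠ 1 for all l. -/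
open Finset

/-- The best-response matrix `D(α)`: diagonal entries equal `1`, and the
entry in row `m`, column `l` (`l ≠ m`) equals `1/α_m`. -/
noncomputable def brMatrix {M : ℕ} (α : Fin M → ℝ) : Matrix (Fin M) (Fin M) ℝ :=
  Matrix.of fun m l => if m = l then 1 else 1 / α m

/-- the determinant of the best-response matrix admits the closed
form `det D(α) = (1 − ((1 − α_1)/α_1)·Σ_{l=2}^{M} 1/(α_l − 1)) ·
∏_{l=2}^{M} (1 − 1/α_l)` for any `M ≥ 2` (here `M = n + 2`) and any reals
`α_1, …, α_M` with `α_l ≠ 0` and `α_l ≠ 1` for all `l`. -/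
theorem brMatrix_det (n : ℕ) (α : Fin (n + 2) → ℝ)
    (h0 : ∀ l, α l ≠ 0) (h1 : ∀ l, α l ≠ 1) :
    (brMatrix α).det =
      (1 - ((1 - α 0) / α 0) * ∑ l ∈ Finset.univ.erase 0, 1 / (α l - 1)) *
        ∏ l ∈ Finset.univ.erase 0, (1 - 1 / α l) := by
  have hs : ∀ l, α l - 1 ≠ 0 := fun l => sub_ne_zero.mpr (h1 l)
  set c : Fin (n + 2) → ℝ := fun m => (α m - 1) / α m with hc
  set w : Fin (n + 2) → ℝ := fun m => 1 / (α m - 1) with hw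
  have key : brMatrix α =
      Matrix.diagonal c * (1 + Matrix.replicateCol (Fin 1) w * Matrix.replicateRow (Fin 1) (1 : Fin (n + 2) → ℝ)) := by
    ext m l
    simp only [brMatrix, Matrix.of_apply, Matrix.mul_apply, Matrix.diagonal,
      Matrix.add_apply, Matrix.one_apply, Matrix.replicateCol_apply, Matrix.replicateRow_apply,
      Matrix.of_apply, Pi.one_apply, Fin.sum_univ_one, ite_mul, zero_mul, Finset.sum_ite_eq, Finset.mem_univ, if_true]
    by_cases h : m = l
    · subst h
      simp only [if_true, hc, hw]
      field_simp [hs m, h0 m]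
      ring
    · simp only [if_neg h, hc, hw]
      field_simp [hs m, h0 m]
      all_goals first | exact h | (rw [if_neg h]; ring) | ring
  rw [key, Matrix.det_mul, Matrix.det_diagonal]
  erw [Matrix.det_one_add_replicateCol_mul_replicateRow (ι := Fin 1) w (1 : Fin (n + 2) → ℝ)]
  have hdot : dotProduct (1 : Fin (n+2) → ℝ) w = ∑ m, w m := by
    simp [dotProduct]
  rw [hdot]
  have hprod : ∏ m, c m = c 0 * ∏ l ∈ Finset.univ.erase 0, c l :=
    (Finset.mul_prod_erase _ _ (Finset.mem_univ 0)).symm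
  have hsum : ∑ m, w m = w 0 + ∑ l ∈ Finset.univ.erase 0, w l :=
    (Finset.add_sum_erase _ _ (Finset.mem_univ 0)).symm
  rw [hprod, hsum]
  have hcw : ∀ l, c l = 1 - 1 / α l := by
    intro l; simp only [hc]; field_simp [h0 l]
  rw [Finset.prod_congr rfl fun l _ => hcw l]
  have h00 : ∀ S : ℝ, c 0 * (1 + (w 0 + S)) = 1 - ((1 - α 0) / α 0) * S := by
    intro S
    simp only [hc, hw]
    field_simp [hs 0, h0 0]
    ring
  rw [mul_comm (c 0), mul_assoc, h00, mul_comm]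
end

section
/- (Theorem 1, Nash Equilibrium) The vector q* defined componentwise by q*_m = c·a_m·b_m / D satisfies the system of best-response equations q*_m + (1/α_m)·Σ_{l≠m} q*_l = c for every m ∈ {1, …, M}; equivalently, D(α)·q* = c·𝟙 where 𝟙 is the all-ones vector, and q* is the unique such solution since D = det(D(α)) ≠ 0. -/
open Finset

/-- The coefficient `a_m` of Theorem 1 (with `M = n + 2` providers, the first
provider indexed by `0` and the last by `Fin.last (n+1)`):
for `m ≠ 1`, `a_m = 1 − 1/α_m − ((1 − α_1)/α_1)·Σ_{l=2,l≠m}^{M} (α_m − α_l)/((α_l − 1)·α_m)`;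
for `m = 1`, `a_1 = 1 − 1/α_1 − ((1 − α_M)/α_M)·Σ_{l=2}^{M−1} (α_1 − α_l)/((α_l − 1)·α_1)`. -/
noncomputable def aCoef (n : ℕ) (α : Fin (n + 2) → ℝ) (m : Fin (n + 2)) : ℝ :=
  if m = 0 then
    1 - 1 / α 0 -
      ((1 - α (Fin.last (n + 1))) / α (Fin.last (n + 1))) *
        ∑ l ∈ (Finset.univ.erase 0).erase (Fin.last (n + 1)),
          (α 0 - α l) / ((α l - 1) * α 0)
  else
    1 - 1 / α m -
      ((1 - α 0) / α 0) *
        ∑ l ∈ (Finset.univ.erase 0).erase m, (α m - α l) / ((α l - 1) * α m)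

/-- The coefficient `b_m` of Theorem 1: for `m ≠ 1`,
`b_m = ∏_{l=2,l≠m}^{M} (1 − 1/α_l)`; for `m = 1`,
`b_1 = ∏_{l=2}^{M−1} (1 − 1/α_l)`. -/
noncomputable def bCoef (n : ℕ) (α : Fin (n + 2) → ℝ) (m : Fin (n + 2)) : ℝ :=
  if m = 0 then
    ∏ l ∈ (Finset.univ.erase 0).erase (Fin.last (n + 1)), (1 - 1 / α l)
  else
    ∏ l ∈ (Finset.univ.erase 0).erase m, (1 - 1 / α l)

/-- The denominator
`D = (1 − ((1 − α_1)/α_1)·Σ_{l=2}^{M} 1/(α_l − 1)) · ∏_{l=2}^{M} (1 − 1/α_l)`. -/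
noncomputable def dDenom (n : ℕ) (α : Fin (n + 2) → ℝ) : ℝ :=
  (1 - ((1 - α 0) / α 0) * ∑ l ∈ Finset.univ.erase 0, 1 / (α l - 1)) *
    ∏ l ∈ Finset.univ.erase 0, (1 - 1 / α l)

section NashAux

variable {n : ℕ}

lemma nash_key_identity (α : Fin (n + 2) → ℝ) (hα : ∀ l, 1 < α l)
    (i j : Fin (n + 2)) (hij : i ≠ j) :
    (1 - 1 / α i -
        ((1 - α j) / α j) *
          ∑ l ∈ (Finset.univ.erase j).erase i, (α i - α l) / ((α l - 1) * α i)) *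
      ∏ l ∈ (Finset.univ.erase j).erase i, (1 - 1 / α l)
    = (∏ l, (1 - 1 / α l)) * (1 + ∑ l, 1 / (α l - 1)) -
        (n + 1) * ((∏ l, (1 - 1 / α l)) * (1 / (α i - 1))) := by
  have h0 : ∀ l, α l ≠ 0 := fun l => ne_of_gt (by linarith [hα l])
  have h1 : ∀ l, α l - 1 ≠ 0 := fun l => ne_of_gt (by linarith [hα l])
  set s := (Finset.univ.erase j).erase i with hs
  have hi : i ∈ Finset.univ.erase j := Finset.mem_erase.2 ⟨hij, Finset.mem_univ i⟩
  have hcard : s.card = n := by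
    rw [hs, Finset.card_erase_of_mem hi, Finset.card_erase_of_mem (Finset.mem_univ j),
      Finset.card_univ, Fintype.card_fin]
    omega
  have hsum : ∑ l ∈ s, (α i - α l) / ((α l - 1) * α i)
      = (1 - 1 / α i) * (∑ l ∈ s, 1 / (α l - 1)) - n * (1 / α i) := by
    have hterm : ∀ l ∈ s, (α i - α l) / ((α l - 1) * α i)
        = (1 - 1 / α i) * (1 / (α l - 1)) - 1 / α i := by
      intro l hl
      field_simp [h0 i, h0 l, h1 l]
      ring
    rw [Finset.sum_congr rfl hterm, Finset.sum_sub_distrib, Finset.sum_const, hcard,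
      nsmul_eq_mul, Finset.mul_sum]
  have hT : ∑ l, 1 / (α l - 1)
      = 1 / (α j - 1) + (1 / (α i - 1) + ∑ l ∈ s, 1 / (α l - 1)) := by
    rw [← Finset.add_sum_erase _ _ (Finset.mem_univ j), ← Finset.add_sum_erase _ _ hi]
  have hP : ∏ l, (1 - 1 / α l)
      = (1 - 1 / α j) * ((1 - 1 / α i) * ∏ l ∈ s, (1 - 1 / α l)) := by
    rw [← Finset.mul_prod_erase _ _ (Finset.mem_univ j), ← Finset.mul_prod_erase _ _ hi]
  rw [hsum, hT, hP]
  field_simp [h0 i, h0 j, h1 i, h1 j]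
  ring

lemma nash_dDenom_eq (α : Fin (n + 2) → ℝ) (hα : ∀ l, 1 < α l) :
    dDenom n α = (∏ l, (1 - 1 / α l)) * (1 + ∑ l, 1 / (α l - 1)) := by
  have h0 : α 0 ≠ 0 := ne_of_gt (by linarith [hα 0])
  have h1 : α 0 - 1 ≠ 0 := ne_of_gt (by linarith [hα 0])
  have hT : ∑ l, 1 / (α l - 1)
      = 1 / (α 0 - 1) + ∑ l ∈ Finset.univ.erase 0, 1 / (α l - 1) := by
    rw [← Finset.add_sum_erase _ _ (Finset.mem_univ 0)]
  have hP : ∏ l, (1 - 1 / α l)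
      = (1 - 1 / α 0) * ∏ l ∈ Finset.univ.erase 0, (1 - 1 / α l) := by
    rw [← Finset.mul_prod_erase _ _ (Finset.mem_univ 0)]
  rw [dDenom, hT, hP]
  field_simp [h0, h1]
  ring

lemma nash_zero_ne_last : (0 : Fin (n + 2)) ≠ Fin.last (n + 1) := by
  simp [Fin.ext_iff, Fin.last]

lemma nash_F_eq (α : Fin (n + 2) → ℝ) (hα : ∀ l, 1 < α l) (m : Fin (n + 2)) :
    aCoef n α m * bCoef n α m
      = (∏ l, (1 - 1 / α l)) * (1 + ∑ l, 1 / (α l - 1)) -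
          (n + 1) * ((∏ l, (1 - 1 / α l)) * (1 / (α m - 1))) := by
  by_cases hm : m = 0
  · subst hm
    simp only [aCoef, bCoef, eq_self_iff_true, if_true]
    rw [Finset.erase_right_comm]
    exact nash_key_identity α hα 0 (Fin.last (n + 1)) nash_zero_ne_last
  · simp only [aCoef, bCoef, if_neg hm]
    exact nash_key_identity α hα m 0 hm

lemma nash_eqn (α : Fin (n + 2) → ℝ) (hα : ∀ l, 1 < α l) (m : Fin (n + 2)) :
    aCoef n α m * bCoef n α m +
      (1 / α m) * ∑ l ∈ Finset.univ.erase m, aCoef n α l * bCoef n α l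
    = dDenom n α := by
  have h0 : α m ≠ 0 := ne_of_gt (by linarith [hα m])
  have h1 : α m - 1 ≠ 0 := ne_of_gt (by linarith [hα m])
  have hsum : ∑ l, aCoef n α l * bCoef n α l
      = (n + 2) * ((∏ l, (1 - 1 / α l)) * (1 + ∑ l, 1 / (α l - 1))) -
          (n + 1) * (∏ l, (1 - 1 / α l)) * ∑ l, 1 / (α l - 1) := by
    rw [Finset.sum_congr rfl fun l _ => nash_F_eq α hα l, Finset.sum_sub_distrib,
      Finset.sum_const, Finset.card_univ, Fintype.card_fin, nsmul_eq_mul]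
    rw [← Finset.mul_sum, ← Finset.mul_sum]
    push_cast
    ring
  rw [Finset.sum_erase_eq_sub (Finset.mem_univ m), hsum, nash_F_eq α hα m,
    nash_dDenom_eq α hα]
  field_simp
  ring

lemma nash_mulVec_apply (α : Fin (n + 2) → ℝ) (q : Fin (n + 2) → ℝ) (m : Fin (n + 2)) :
    (brMatrix α).mulVec q m = q m + (1 / α m) * ∑ l ∈ Finset.univ.erase m, q l := by
  have : (brMatrix α).mulVec q m = ∑ l, (if m = l then 1 else 1 / α m) * q l := rfl
  rw [this, ← Finset.add_sum_erase _ _ (Finset.mem_univ m), if_pos rfl, one_mul,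
    Finset.mul_sum]
  congr 1
  refine Finset.sum_congr rfl fun l hl => ?_
  rw [if_neg (Ne.symm (Finset.mem_erase.1 hl).1)]

lemma nash_Tpos (α : Fin (n + 2) → ℝ) (hα : ∀ l, 1 < α l) :
    0 < ∑ l, 1 / (α l - 1) :=
  Finset.sum_pos (fun l _ => one_div_pos.mpr (by linarith [hα l])) Finset.univ_nonempty

lemma nash_inj (α : Fin (n + 2) → ℝ) (hα : ∀ l, 1 < α l)
    (v : Fin (n + 2) → ℝ) (hv : (brMatrix α).mulVec v = 0) : v = 0 := by
  have h0 : ∀ l, α l ≠ 0 := fun l => ne_of_gt (by linarith [hα l])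
  have h1 : ∀ l, α l - 1 ≠ 0 := fun l => ne_of_gt (by linarith [hα l])
  obtain ⟨S, hSdef⟩ : ∃ S : ℝ, S = ∑ l, v l := ⟨_, rfl⟩
  have hvm : ∀ m, v m = -S / (α m - 1) := by
    intro m
    have h := congrFun hv m
    rw [nash_mulVec_apply, Finset.sum_erase_eq_sub (Finset.mem_univ m), ← hSdef] at h
    simp only [Pi.zero_apply] at h
    rw [eq_div_iff (h1 m)]
    field_simp [h0 m] at h
    linear_combination h
  have h2 : S = -S * ∑ l, 1 / (α l - 1) :=
    calc S = ∑ l, v l := hSdef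
      _ = ∑ l, -S * (1 / (α l - 1)) :=
          Finset.sum_congr rfl fun l _ => by rw [hvm l, div_eq_mul_one_div]
      _ = -S * ∑ l, 1 / (α l - 1) := by rw [← Finset.mul_sum]
  have h3 : S * (1 + ∑ l, 1 / (α l - 1)) = 0 := by linear_combination h2
  have h4 : (1 + ∑ l, 1 / (α l - 1)) ≠ 0 :=
    ne_of_gt (by linarith [nash_Tpos α hα])
  have hS0 : S = 0 := by
    rcases mul_eq_zero.1 h3 with h | h
    · exact h
    · exact absurd h h4
  funext m
  rw [hvm m, hS0]
  simp

end NashAux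

/-- Theorem 1, Nash Equilibrium: with `c = 1/π − 1`, the vector
`q*` defined componentwise by `q*_m = c·a_m·b_m/D` satisfies the system of
best-response equations `q*_m + (1/α_m)·Σ_{l≠m} q*_l = c` for every `m`;
equivalently, `D(α)·q* = c·𝟙`, and `q*` is the unique such solution since
`D = det D(α) ≠ 0`. -/
theorem nash_equilibrium_closed_form (n : ℕ) (α : Fin (n + 2) → ℝ)
    (hα : ∀ l, 1 < α l) (π : ℝ) (hπ : π ∈ Set.Ioo (0 : ℝ) 1)
    (c : ℝ) (hc : c = 1 / π - 1) (hD : dDenom n α ≠ 0) :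
    (∀ m, c * aCoef n α m * bCoef n α m / dDenom n α +
        (1 / α m) *
          ∑ l ∈ Finset.univ.erase m, c * aCoef n α l * bCoef n α l / dDenom n α
        = c) ∧
    (brMatrix α).mulVec (fun m => c * aCoef n α m * bCoef n α m / dDenom n α) =
      (fun _ => c) ∧
    ∀ q : Fin (n + 2) → ℝ, (brMatrix α).mulVec q = (fun _ => c) →
      q = fun m => c * aCoef n α m * bCoef n α m / dDenom n α := by
  have part1 : ∀ m, c * aCoef n α m * bCoef n α m / dDenom n α +
      (1 / α m) *
        ∑ l ∈ Finset.univ.erase m, c * aCoef n α l * bCoef n α l / dDenom n α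
      = c := by
    intro m
    have key := nash_eqn α hα m
    have hs : ∑ l ∈ Finset.univ.erase m, c * aCoef n α l * bCoef n α l / dDenom n α
        = c / dDenom n α * ∑ l ∈ Finset.univ.erase m, aCoef n α l * bCoef n α l := by
      rw [Finset.mul_sum]
      exact Finset.sum_congr rfl fun l _ => by ring
    have hcancel : c / dDenom n α * dDenom n α = c := div_mul_cancel₀ c hD
    rw [hs]
    linear_combination (c / dDenom n α) * key + hcancel
  have part2 : (brMatrix α).mulVec
      (fun m => c * aCoef n α m * bCoef n α m / dDenom n α) = (fun _ => c) := by
    funext m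
    rw [nash_mulVec_apply]
    exact part1 m
  refine ⟨part1, part2, ?_⟩
  intro q hq
  have hzero : (brMatrix α).mulVec
      (q - fun m => c * aCoef n α m * bCoef n α m / dDenom n α) = 0 := by
    rw [Matrix.mulVec_sub, hq, part2]
    simp
  have := nash_inj α hα _ hzero
  exact sub_eq_zero.1 this
end

section
/- (Two-provider Nash equilibrium) For M = 2, if α_1·α_2 ≠ 1 then the unique solution of the pair of equations q_1 + q_2/α_1 = c and q_2 + q_1/α_2 = c is q_1^NE = c·(α_1 − 1)·α_2/(α_1·α_2 − 1) and q_2^NE = c·(α_2 − 1)·α_1/(α_1·α_2 − 1). Moreover, if α_1 > 1, α_2 > 1 and 0 < π < 1 (so that c = 1/π − 1 > 0), then q_1^NE > 0 and q_2^NE > 0, and (q_1^NE, q_2^NE) is a Nash equilibrium of the two-provider game. -/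
/-- Provider 1's utility in the two-provider game:
`u₁(q₁, q₂) = log(1 + q₁/(1 + q₂/α₁)) − π·q₁`. -/
noncomputable def u₁ (α₁ π q₁ q₂ : ℝ) : ℝ :=
  Real.log (1 + q₁ / (1 + q₂ / α₁)) - π * q₁

/-- Provider 2's utility in the two-provider game:
`u₂(q₁, q₂) = log(1 + q₂/(1 + q₁/α₂)) − π·q₂`. -/
noncomputable def u₂ (α₂ π q₁ q₂ : ℝ) : ℝ :=
  Real.log (1 + q₂ / (1 + q₁ / α₂)) - π * q₂

lemma key_concave (π D x xs : ℝ) (hπ : 0 < π) (hD : 0 < D)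
    (hxs : D + xs = 1 / π) (hx : 0 ≤ x) :
    Real.log (1 + x / D) - π * x ≤ Real.log (1 + xs / D) - π * xs := by
  have hDx : 0 < D + x := by linarith
  have hDxs : 0 < D + xs := by rw [hxs]; positivity
  have h1 : (1 : ℝ) + x / D = (D + x) / D := by field_simp
  have h2 : (1 : ℝ) + xs / D = (D + xs) / D := by field_simp
  rw [h1, h2, Real.log_div (ne_of_gt hDx) (ne_of_gt hD),
    Real.log_div (ne_of_gt hDxs) (ne_of_gt hD)]
  have h3 : Real.log (D + x) - Real.log (D + xs) ≤ π * (x - xs) := by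
    have := Real.log_le_sub_one_of_pos (show 0 < (D + x) / (D + xs) by positivity)
    rw [Real.log_div (ne_of_gt hDx) (ne_of_gt hDxs)] at this
    have hne : (D + xs) ≠ 0 := ne_of_gt hDxs
    have : Real.log (D + x) - Real.log (D + xs) ≤ (x - xs) / (D + xs) := by
      calc Real.log (D + x) - Real.log (D + xs) ≤ (D + x) / (D + xs) - 1 := this
        _ = (x - xs) / (D + xs) := by field_simp; ring
    calc Real.log (D + x) - Real.log (D + xs) ≤ (x - xs) / (D + xs) := this
      _ = π * (x - xs) := by rw [hxs]; field_simp
  linarith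

/-- Two-provider Nash equilibrium: with `c = 1/π − 1`, if
`α₁·α₂ ≠ 1` then the unique solution of `q₁ + q₂/α₁ = c` and
`q₂ + q₁/α₂ = c` is `q₁^NE = c·(α₁ − 1)·α₂/(α₁·α₂ − 1)` and
`q₂^NE = c·(α₂ − 1)·α₁/(α₁·α₂ − 1)`. Moreover, if `α₁ > 1` and `α₂ > 1`
(and `0 < π < 1`, so `c > 0`), then `q₁^NE > 0`, `q₂^NE > 0`, and
`(q₁^NE, q₂^NE)` is a Nash equilibrium of the two-provider game. -/
theorem two_provider_nash (α₁ α₂ π : ℝ) (hα₁ : 0 < α₁) (hα₂ : 0 < α₂)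
    (hπ : π ∈ Set.Ioo (0 : ℝ) 1) (c : ℝ) (hc : c = 1 / π - 1) :
    (α₁ * α₂ ≠ 1 →
      (c * (α₁ - 1) * α₂ / (α₁ * α₂ - 1) +
          c * (α₂ - 1) * α₁ / (α₁ * α₂ - 1) / α₁ = c ∧
        c * (α₂ - 1) * α₁ / (α₁ * α₂ - 1) +
          c * (α₁ - 1) * α₂ / (α₁ * α₂ - 1) / α₂ = c) ∧
      ∀ q₁ q₂ : ℝ, q₁ + q₂ / α₁ = c → q₂ + q₁ / α₂ = c →
        q₁ = c * (α₁ - 1) * α₂ / (α₁ * α₂ - 1) ∧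
        q₂ = c * (α₂ - 1) * α₁ / (α₁ * α₂ - 1)) ∧
    (1 < α₁ → 1 < α₂ →
      0 < c * (α₁ - 1) * α₂ / (α₁ * α₂ - 1) ∧
      0 < c * (α₂ - 1) * α₁ / (α₁ * α₂ - 1) ∧
      (∀ x : ℝ, 0 ≤ x →
        u₁ α₁ π x (c * (α₂ - 1) * α₁ / (α₁ * α₂ - 1)) ≤
          u₁ α₁ π (c * (α₁ - 1) * α₂ / (α₁ * α₂ - 1))
            (c * (α₂ - 1) * α₁ / (α₁ * α₂ - 1))) ∧
      (∀ y : ℝ, 0 ≤ y →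
        u₂ α₂ π (c * (α₁ - 1) * α₂ / (α₁ * α₂ - 1)) y ≤
          u₂ α₂ π (c * (α₁ - 1) * α₂ / (α₁ * α₂ - 1))
            (c * (α₂ - 1) * α₁ / (α₁ * α₂ - 1)))) := by
  obtain ⟨hπ0, hπ1⟩ := hπ
  have hα₁' : α₁ ≠ 0 := ne_of_gt hα₁
  have hα₂' : α₂ ≠ 0 := ne_of_gt hα₂
  have hcpos : 0 < c := by
    rw [hc]; have : 1 < 1 / π := by rw [lt_div_iff₀ hπ0]; linarith
    linarith
  constructor
  · intro hne
    have hden : α₁ * α₂ - 1 ≠ 0 := sub_ne_zero.mpr hne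
    refine ⟨⟨by field_simp; ring, by rw [div_div, div_add_div _ _ hden (mul_ne_zero hden hα₂'), div_eq_iff (mul_ne_zero hden (mul_ne_zero hden hα₂'))]; ring⟩, ?_⟩
    intro q₁ q₂ h1 h2
    have h1' : q₁ * α₁ + q₂ = c * α₁ := by
      field_simp at h1; linarith
    have h2' : q₂ * α₂ + q₁ = c * α₂ := by
      field_simp at h2; linarith
    constructor
    · rw [eq_div_iff hden]; linear_combination α₂ * h1' - h2'
    · rw [eq_div_iff hden]; linear_combination α₁ * h2' - h1'
  · intro h1 h2
    have hden : 0 < α₁ * α₂ - 1 := by nlinarith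
    have hq1 : 0 < c * (α₁ - 1) * α₂ / (α₁ * α₂ - 1) :=
      div_pos (mul_pos (mul_pos hcpos (by linarith)) hα₂) hden
    have hq2 : 0 < c * (α₂ - 1) * α₁ / (α₁ * α₂ - 1) :=
      div_pos (mul_pos (mul_pos hcpos (by linarith)) hα₁) hden
    set Q₁ := c * (α₁ - 1) * α₂ / (α₁ * α₂ - 1) with hQ1
    set Q₂ := c * (α₂ - 1) * α₁ / (α₁ * α₂ - 1) with hQ2
    have hsum1 : Q₁ + Q₂ / α₁ = c := by
      rw [hQ1, hQ2]; field_simp; ring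
    have hsum2 : Q₂ + Q₁ / α₂ = c := by
      rw [hQ1, hQ2]; rw [div_div, div_add_div _ _ hden.ne' (mul_ne_zero hden.ne' hα₂'), div_eq_iff (mul_ne_zero hden.ne' (mul_ne_zero hden.ne' hα₂'))]; ring
    refine ⟨hq1, hq2, ?_, ?_⟩
    · intro x hx
      unfold u₁
      exact key_concave π (1 + Q₂ / α₁) x Q₁ hπ0
        (by positivity) (by rw [hc] at hsum1; linarith) hx
    · intro y hy
      unfold u₂
      exact key_concave π (1 + Q₁ / α₂) y Q₂ hπ0
        (by positivity) (by rw [hc] at hsum2; linarith) hy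
end

section
/- (Proposition 2, Optimal Price) Assume additionally r < t·S². Then π* = (√(r/t) + r)/(S + r) lies in the interval (r/(S + r), 1) and is the unique maximizer of the operator's utility u_o on (r/(S + r), 1): u_o(π*) > u_o(π) for every π in (r/(S + r), 1) with π ≠ π*. -/
lemma opt_key (S t s π : ℝ) (ht : 0 < t) (hs : 0 < s) (hSr : 0 < S + t * s ^ 2)
    (hq : 0 < (S + t * s ^ 2) * π - t * s ^ 2) :
    (1 - (s + t * s ^ 2) / (S + t * s ^ 2)) * t -
        ((s + t * s ^ 2) / (S + t * s ^ 2)) / s -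
        ((1 - π) * t - π / ((S + t * s ^ 2) * π - t * s ^ 2)) =
      t * ((S + t * s ^ 2) * π - t * s ^ 2 - s) ^ 2 /
        (((S + t * s ^ 2) * π - t * s ^ 2) * (S + t * s ^ 2)) := by
  have h1 := hs.ne'
  have h2 := hSr.ne'
  have h3 := hq.ne'
  have h2' : S + s ^ 2 * t ≠ 0 := by rw [mul_comm]; exact h2
  have h3' : (S + s ^ 2 * t) * π - s ^ 2 * t ≠ 0 := by rw [mul_comm (s ^ 2)]; exact h3
  field_simp
  ring

/-- Proposition 2, Optimal Price: for `S, r, t > 0` with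
`r < t·S²`, the price `π* = (√(r/t) + r)/(S + r)` lies in the interval
`(r/(S + r), 1)` and is the unique maximizer of the operator's utility
`u_o(π) = (1 − π)·t − 1/(S − (1/π − 1)·r)` on `(r/(S + r), 1)`:
`u_o(π*) > u_o(π)` for every `π` in that interval with `π ≠ π*`. -/
theorem optimal_price_unique_maximizer (S r t : ℝ) (hS : 0 < S) (hr : 0 < r)
    (ht : 0 < t) (h : r < t * S ^ 2) :
    (Real.sqrt (r / t) + r) / (S + r) ∈ Set.Ioo (r / (S + r)) 1 ∧
    ∀ π : ℝ, π ∈ Set.Ioo (r / (S + r)) 1 →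
      π ≠ (Real.sqrt (r / t) + r) / (S + r) →
      (1 - π) * t - 1 / (S - (1 / π - 1) * r) <
        (1 - (Real.sqrt (r / t) + r) / (S + r)) * t -
          1 / (S - (1 / ((Real.sqrt (r / t) + r) / (S + r)) - 1) * r) := by
  set s := Real.sqrt (r / t) with hsdef
  have hSr : 0 < S + r := by linarith
  have hs : 0 < s := Real.sqrt_pos.mpr (div_pos hr ht)
  have hs2 : s ^ 2 = r / t := Real.sq_sqrt (le_of_lt (div_pos hr ht))
  have htr : t * s ^ 2 = r := by rw [hs2]; field_simp
  have hsq : s ^ 2 < S ^ 2 := by rw [hs2, div_lt_iff₀ ht]; linarith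
  have hsS : s < S := by nlinarith [sq_nonneg (s - S)]
  have hπs : 0 < (s + r) / (S + r) := by positivity
  refine ⟨⟨(div_lt_div_iff_of_pos_right hSr).mpr (by linarith), by rw [div_lt_one hSr]; linarith⟩, ?_⟩
  rintro π ⟨h1, h2⟩ hne
  have hπ : 0 < π := lt_trans (by positivity) h1
  have hq : 0 < (S + r) * π - r := by
    have := (div_lt_iff₀ hSr).mp h1
    nlinarith
  have hd1 : S - (1 / π - 1) * r = ((S + r) * π - r) / π := by field_simp; ring
  have hd2 : S - (1 / ((s + r) / (S + r)) - 1) * r = s / ((s + r) / (S + r)) := by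
    have hsr' : s + r ≠ 0 := by positivity
    field_simp
    ring
  rw [hd1, hd2, one_div_div, one_div_div]
  have hqs : (S + r) * π - r ≠ s := by
    intro h0
    apply hne
    rw [eq_div_iff hSr.ne']
    linear_combination h0
  have h2pos : 0 < ((S + r) * π - r - s) ^ 2 :=
    lt_of_le_of_ne (sq_nonneg _) (Ne.symm (pow_ne_zero 2 (sub_ne_zero.mpr hqs)))
  have hid := opt_key S t s π ht hs (by rw [htr]; exact hSr) (by rw [htr]; exact hq)
  rw [htr] at hid
  have hpos : 0 < t * ((S + r) * π - r - s) ^ 2 / (((S + r) * π - r) * (S + r)) :=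
    div_pos (mul_pos ht h2pos) (mul_pos hq hSr)
  have hrw : π / (((S + r) * π - r) / π) = π * π / ((S + r) * π - r) := by
    rw [div_div_eq_mul_div]
  have hrw2 : ((s + r) / (S + r)) / s = (s + r) / ((S + r) * s) := by
    rw [div_div]
  linarith [hid, hpos]
end

section
/- The first-order condition of the operator has a unique solution in the feasible price range: if r < t·S², then the equation r/(S·π − (1 − π)·r)² = t has exactly one solution π in the interval (r/(S + r), 1), namely π = (√(r/t) + r)/(S + r). -/
/-- the first-order condition of the operator has a unique
solution in the feasible price range: if `r < t·S²` (with `S, r, t > 0`),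
then the equation `r/(S·π − (1 − π)·r)² = t` has exactly one solution `π` in
the interval `(r/(S + r), 1)`, namely `π = (√(r/t) + r)/(S + r)`. -/
theorem first_order_condition_unique_solution (S r t : ℝ) (hS : 0 < S)
    (hr : 0 < r) (ht : 0 < t) (h : r < t * S ^ 2) :
    (Real.sqrt (r / t) + r) / (S + r) ∈ Set.Ioo (r / (S + r)) 1 ∧
    ∀ π : ℝ, π ∈ Set.Ioo (r / (S + r)) 1 →
      (r / (S * π - (1 - π) * r) ^ 2 = t ↔
        π = (Real.sqrt (r / t) + r) / (S + r)) := by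
  have hSr : 0 < S + r := by linarith
  have hrt : 0 < r / t := div_pos hr ht
  set s := Real.sqrt (r / t) with hs
  have hs0 : 0 < s := Real.sqrt_pos.mpr hrt
  have hs2 : s ^ 2 = r / t := Real.sq_sqrt hrt.le
  have hsS : s < S := by
    have h2 : s ^ 2 < S ^ 2 := by
      rw [hs2, div_lt_iff₀ ht]; nlinarith
    nlinarith
  constructor
  · constructor
    · rw [div_lt_div_iff₀ hSr hSr]; nlinarith
    · rw [div_lt_one hSr]; linarith
  · intro π hπ
    obtain ⟨h1, h2⟩ := hπ
    have hX : 0 < S * π - (1 - π) * r := by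
      rw [div_lt_iff₀ hSr] at h1; nlinarith
    constructor
    · intro heq
      have hXs : (S * π - (1 - π) * r) ^ 2 = s ^ 2 := by
        rw [hs2, eq_div_iff ht.ne']
        rw [div_eq_iff (pow_ne_zero 2 hX.ne')] at heq
        linarith
      have hXeq : S * π - (1 - π) * r = s := by nlinarith
      rw [eq_div_iff hSr.ne']
      nlinarith
    · intro heq
      subst heq
      have hX' : S * ((s + r) / (S + r)) - (1 - (s + r) / (S + r)) * r = s := by
        field_simp; ring
      rw [hX', hs2]
      field_simp
end
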